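/- Let X be a separable metric space and k : X × X → ℝ a bounded continuous symmetric kernel that is positive semidefinite, i.e., for every finite family x_1,…,x_m ∈ X and c_1,…,c_m ∈ ℝ one has Σ_{i,j} c_i c_j k(x_i,x_j) ≥ 0. Then for every finite signed Borel measure ν on X, the energy E_k(ν) = ∬ k(x,x') dν(x) dν(x') is nonnegative. -/

import Mathlib

open MeasureTheory Filter Topology

set_option maxHeartbeats 1000000

private lemma bdd_integrable {X : Type*} [MeasurableSpace X] {μ : Measure X}
    [IsFiniteMeasure μ] {f : X → ℝ} (hm : Measurable f) {M : ℝ} (hb : ∀ x, |f x| ≤ M) :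
    Integrable f μ :=
  (integrable_const M).mono' hm.aestronglyMeasurable
    (ae_of_all _ fun x => by simpa [Real.norm_eq_abs] using hb x)

private lemma quad_discrete
    {X : Type*} [MeasurableSpace X]
    (k : X × X → ℝ) (M : ℝ) (hk_bdd : ∀ p, |k p| ≤ M) (hk_meas : Measurable k)
    (hk_psd : ∀ (m : ℕ) (x : Fin m → X) (c : Fin m → ℝ),
      0 ≤ ∑ i, ∑ j, c i * c j * k (x i, x j))
    (d : ℕ → X) (idx : X → ℕ) (hidx : Measurable idx)
    (μ lam : Measure X) [IsFiniteMeasure μ] [IsFiniteMeasure lam] :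
    0 ≤ (∫ x, ((∫ y, k (d (idx x), d (idx y)) ∂μ) - ∫ y, k (d (idx x), d (idx y)) ∂lam) ∂μ)
      - ∫ x, ((∫ y, k (d (idx x), d (idx y)) ∂μ) - ∫ y, k (d (idx x), d (idx y)) ∂lam) ∂lam := by
  have hM : 0 ≤ M := le_trans (abs_nonneg _) (hk_bdd (d 0, d 0))
  set A : ℕ → Set X := fun i => idx ⁻¹' {i} with hA_def
  have hA : ∀ i, MeasurableSet (A i) := fun i => hidx (measurableSet_singleton i)
  have hdisj : Pairwise (Function.onFun Disjoint A) := by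
    intro i j hij
    refine Set.disjoint_left.2 fun x hx hx' => hij ?_
    simp only [hA_def, Set.mem_preimage, Set.mem_singleton_iff] at hx hx'
    rw [← hx, ← hx']
  have hUnion : (⋃ i, A i) = Set.univ := by
    ext x; simp [hA_def]
  set a : ℕ → ℝ := fun i => (μ (A i)).toReal with ha_def
  set b : ℕ → ℝ := fun i => (lam (A i)).toReal with hb_def
  set c : ℕ → ℝ := fun i => a i - b i with hc_def
  have hsuma : Summable a := by
    refine ENNReal.summable_toReal ?_
    rw [← measure_iUnion hdisj hA]
    exact measure_ne_top μ _
  have hsumb : Summable b := by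
    refine ENNReal.summable_toReal ?_
    rw [← measure_iUnion hdisj hA]
    exact measure_ne_top lam _
  have hsumc : Summable c := hsuma.sub hsumb
  have hdmeas : Measurable fun x => d (idx x) := measurable_from_top.comp hidx
  -- inner sums
  have hmz : ∀ z : X, Measurable fun y => k (z, d (idx y)) :=
    fun z => hk_meas.comp (measurable_const.prodMk hdmeas)
  have hint : ∀ (z : X) (ν : Measure X) [IsFiniteMeasure ν],
      Integrable (fun y => k (z, d (idx y))) ν :=
    fun z ν _ => bdd_integrable (hmz z) (fun y => hk_bdd _)
  have hinner : ∀ (z : X) (ν : Measure X) [IsFiniteMeasure ν] (w : ℕ → ℝ)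
      (hw : ∀ i, w i = (ν (A i)).toReal),
      HasSum (fun j => k (z, d j) * w j) (∫ y, k (z, d (idx y)) ∂ν) := by
    intro z ν _ w hw
    have h := hasSum_integral_iUnion (μ := ν) (f := fun y => k (z, d (idx y))) hA hdisj
      (by rw [hUnion]; exact (hint z ν).integrableOn)
    rw [hUnion, setIntegral_univ] at h
    convert h using 2 with j
    · rfl
    rw [setIntegral_congr_fun (hA j) (g := fun _ => k (z, d j))
      (fun y hy => by simp only [hA_def, Set.mem_preimage, Set.mem_singleton_iff] at hy; rw [hy]),
      setIntegral_const, measureReal_def, smul_eq_mul, hw j, mul_comm]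
  have key_inner : ∀ z : X, HasSum (fun j => k (z, d j) * c j)
      ((∫ y, k (z, d (idx y)) ∂μ) - ∫ y, k (z, d (idx y)) ∂lam) := by
    intro z
    have h := (hinner z μ a fun _ => rfl).sub (hinner z lam b fun _ => rfl)
    convert h using 2 with j
    · rfl
    simp [hc_def, mul_sub]
  -- outer sums
  set W : ℕ → ℝ := fun i => (∫ y, k (d i, d (idx y)) ∂μ) - ∫ y, k (d i, d (idx y)) ∂lam with hW_def
  have hWbdd : ∀ i, |W i| ≤ M * (μ Set.univ).toReal + M * (lam Set.univ).toReal := by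
    intro i
    have h1 : ‖∫ y, k (d i, d (idx y)) ∂μ‖ ≤ M * (μ Set.univ).toReal :=
      norm_integral_le_of_norm_le_const (ae_of_all _ fun y => by
        simpa [Real.norm_eq_abs] using hk_bdd (d i, d (idx y)))
    have h2 : ‖∫ y, k (d i, d (idx y)) ∂lam‖ ≤ M * (lam Set.univ).toReal :=
      norm_integral_le_of_norm_le_const (ae_of_all _ fun y => by
        simpa [Real.norm_eq_abs] using hk_bdd (d i, d (idx y)))
    calc |W i| ≤ ‖∫ y, k (d i, d (idx y)) ∂μ‖ + ‖∫ y, k (d i, d (idx y)) ∂lam‖ :=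
          abs_sub _ _
      _ ≤ _ := add_le_add h1 h2
  have hWmeas : Measurable fun x => W (idx x) :=
    Measurable.comp (measurable_from_top (f := W)) hidx
  have hWint : ∀ (ν : Measure X) [IsFiniteMeasure ν], Integrable (fun x => W (idx x)) ν :=
    fun ν _ => bdd_integrable hWmeas fun x => hWbdd _
  have houter : ∀ (ν : Measure X) [IsFiniteMeasure ν] (w : ℕ → ℝ)
      (hw : ∀ i, w i = (ν (A i)).toReal),
      HasSum (fun i => W i * w i) (∫ x, W (idx x) ∂ν) := by
    intro ν _ w hw
    have h := hasSum_integral_iUnion (μ := ν) (f := fun x => W (idx x)) hA hdisj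
      (by rw [hUnion]; exact (hWint ν).integrableOn)
    rw [hUnion, setIntegral_univ] at h
    convert h using 2 with i
    · rfl
    rw [setIntegral_congr_fun (hA i) (g := fun _ => W i)
      (fun x hx => by simp only [hA_def, Set.mem_preimage, Set.mem_singleton_iff] at hx; rw [hx]),
      setIntegral_const, measureReal_def, smul_eq_mul, hw i, mul_comm]
  have hQ : HasSum (fun i => W i * c i)
      ((∫ x, W (idx x) ∂μ) - ∫ x, W (idx x) ∂lam) := by
    have h := (houter μ a fun _ => rfl).sub (houter lam b fun _ => rfl)
    convert h using 2 with i
    · rfl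
    simp [hc_def, mul_sub]
  -- the double series
  set F : ℕ × ℕ → ℝ := fun p => c p.1 * c p.2 * k (d p.1, d p.2) with hF_def
  have hFs : Summable F := by
    have hca : Summable fun i => |c i| := hsumc.abs
    have hcn : Summable fun i => ‖|c i|‖ := by
      simpa only [Real.norm_eq_abs, abs_abs] using hca
    have hprod : Summable fun p : ℕ × ℕ => |c p.1| * |c p.2| :=
      summable_mul_of_summable_norm (f := fun i => |c i|) (g := fun j => |c j|) hcn hcn
    refine Summable.of_norm_bounded (hprod.mul_left M) fun p => ?_
    rw [Real.norm_eq_abs, hF_def]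
    calc |c p.1 * c p.2 * k (d p.1, d p.2)| = |c p.1| * |c p.2| * |k (d p.1, d p.2)| := by
          rw [abs_mul, abs_mul]
      _ ≤ |c p.1| * |c p.2| * M :=
          mul_le_mul_of_nonneg_left (hk_bdd _) (mul_nonneg (abs_nonneg _) (abs_nonneg _))
      _ = M * (|c p.1| * |c p.2|) := by ring
  have hfib : ∀ i, HasSum (fun j => F (i, j)) (c i * W i) := by
    intro i
    have h := (key_inner (d i)).mul_left (c i)
    convert h using 2 with j
    · rfl
    simp only [hF_def]; ring
  have hS : HasSum (fun i => c i * W i) (∑' p, F p) := hFs.hasSum.prod_fiberwise hfib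
  have hQS : ((∫ x, W (idx x) ∂μ) - ∫ x, W (idx x) ∂lam) = ∑' p, F p := by
    refine HasSum.unique ?_ hS
    convert hQ using 2 with i
    ring
  have hsq : ∀ n : ℕ, 0 ≤ ∑ p ∈ Finset.range n ×ˢ Finset.range n, F p := by
    intro n
    rw [Finset.sum_product]
    calc (0:ℝ) ≤ ∑ i : Fin n, ∑ j : Fin n, c i * c j * k (d i, d j) :=
          hk_psd n (fun i => d i) (fun i => c i)
      _ = ∑ i ∈ Finset.range n, ∑ j ∈ Finset.range n, F (i, j) := by
          rw [← Fin.sum_univ_eq_sum_range (fun i => ∑ j ∈ Finset.range n, F (i, j)) n]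
          refine Finset.sum_congr rfl fun i _ => ?_
          rw [← Fin.sum_univ_eq_sum_range (fun j => F ((i : ℕ), j)) n]
  have htop : Tendsto (fun n : ℕ => Finset.range n ×ˢ Finset.range n) atTop atTop := by
    refine tendsto_atTop_finset_of_monotone (fun m n hmn => ?_) (fun p => ?_)
    · exact Finset.product_subset_product (Finset.range_subset_range.2 hmn) (Finset.range_subset_range.2 hmn)
    · exact ⟨max p.1 p.2 + 1, by simp [Finset.mem_product, Nat.lt_succ, le_refl,
        le_max_left, le_max_right]⟩
  have htend : Tendsto (fun n => ∑ p ∈ Finset.range n ×ˢ Finset.range n, F p) atTop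
      (𝓝 (∑' p, F p)) := hFs.hasSum.comp htop
  have hSnn : 0 ≤ ∑' p, F p := ge_of_tendsto htend (Eventually.of_forall hsq)
  show (0:ℝ) ≤ (∫ x, W (idx x) ∂μ) - ∫ x, W (idx x) ∂lam
  rw [hQS]; exact hSnn

private lemma tendsto_iter
    {X : Type*} [MeasurableSpace X] [TopologicalSpace X]
    (k : X × X → ℝ) (M : ℝ) (hk_bdd : ∀ p, |k p| ≤ M) (hk_meas : Measurable k)
    (hk_cont : Continuous k)
    (T : ℕ → X → X) (hT : ∀ n, Measurable (T n))
    (hTlim : ∀ x, Tendsto (fun n => T n x) atTop (𝓝 x))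
    (ν₁ ν₂ : Measure X) [IsFiniteMeasure ν₁] [IsFiniteMeasure ν₂] :
    Tendsto (fun n => ∫ x, ∫ y, k (T n x, T n y) ∂ν₂ ∂ν₁) atTop
      (𝓝 (∫ x, ∫ y, k (x, y) ∂ν₂ ∂ν₁)) := by
  have hFn : ∀ n, Measurable fun p : X × X => k (T n p.1, T n p.2) :=
    fun n => hk_meas.comp (((hT n).comp measurable_fst).prodMk ((hT n).comp measurable_snd))
  have hintn : ∀ n, Integrable (fun p : X × X => k (T n p.1, T n p.2)) (ν₁.prod ν₂) :=
    fun n => bdd_integrable (hFn n) fun p => hk_bdd _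
  have hint0 : Integrable k (ν₁.prod ν₂) := bdd_integrable hk_meas fun p => hk_bdd p
  have e1 : ∀ n, (∫ x, ∫ y, k (T n x, T n y) ∂ν₂ ∂ν₁)
      = ∫ p, k (T n p.1, T n p.2) ∂(ν₁.prod ν₂) :=
    fun n => (integral_prod _ (hintn n)).symm
  have e0 : (∫ x, ∫ y, k (x, y) ∂ν₂ ∂ν₁) = ∫ p, k p ∂(ν₁.prod ν₂) :=
    (integral_prod _ hint0).symm
  simp only [e1, e0]
  refine tendsto_integral_of_dominated_convergence (fun _ => M)
    (fun n => (hFn n).aestronglyMeasurable) (integrable_const M)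
    (fun n => ae_of_all _ fun p => by simpa [Real.norm_eq_abs] using hk_bdd _)
    (ae_of_all _ fun p => ?_)
  have hp : Tendsto (fun n => (T n p.1, T n p.2)) atTop (𝓝 (p.1, p.2)) :=
    (hTlim p.1).prodMk_nhds (hTlim p.2)
  exact (hk_cont.tendsto (p.1, p.2)).comp hp

private lemma key_nonneg {X : Type*} [MetricSpace X] [TopologicalSpace.SeparableSpace X]
    [MeasurableSpace X] [BorelSpace X] [Nonempty X]
    (k : X × X → ℝ) (M : ℝ) (hk_bdd : ∀ p, |k p| ≤ M) (hk_cont : Continuous k)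
    (hk_psd : ∀ (m : ℕ) (x : Fin m → X) (c : Fin m → ℝ),
      0 ≤ ∑ i, ∑ j, c i * c j * k (x i, x j))
    (μ lam : Measure X) [IsFiniteMeasure μ] [IsFiniteMeasure lam] :
    0 ≤ (∫ x, ((∫ y, k (x, y) ∂μ) - ∫ y, k (x, y) ∂lam) ∂μ)
      - ∫ x, ((∫ y, k (x, y) ∂μ) - ∫ y, k (x, y) ∂lam) ∂lam := by
  haveI : SecondCountableTopology X := UniformSpace.secondCountable_of_separable X
  have hk_meas : Measurable k := hk_cont.measurable
  obtain ⟨d, hd⟩ := TopologicalSpace.exists_dense_seq X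
  have hex : ∀ (n : ℕ) (x : X), ∃ i, dist x (d i) < 1/(n+1) := by
    intro n x
    exact hd.exists_dist_lt x (by positivity)
  set idx : ℕ → X → ℕ := fun n x => Nat.find (hex n x) with hidx_def
  have hdist : ∀ n x, dist x (d (idx n x)) < 1/(n+1) := fun n x => Nat.find_spec (hex n x)
  have hidxm : ∀ n, Measurable (idx n) := by
    intro n
    apply measurable_to_countable'
    intro i
    have heq : idx n ⁻¹' {i} = Metric.ball (d i) (1/(n+1)) ∩
        ⋂ j ∈ Set.Iio i, (Metric.ball (d j) (1/(n+1)))ᶜ := by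
      ext x
      simp only [hidx_def, Set.mem_preimage, Set.mem_singleton_iff, Nat.find_eq_iff,
        Set.mem_inter_iff, Set.mem_iInter, Set.mem_Iio, Set.mem_compl_iff,
        Metric.mem_ball, dist_comm (d _) x]
    rw [heq]
    exact measurableSet_ball.inter
      (MeasurableSet.biInter (Set.to_countable _) fun j _ => measurableSet_ball.compl)
  have hTm : ∀ n, Measurable fun x => d (idx n x) :=
    fun n => Measurable.comp (measurable_from_top (f := d)) (hidxm n)
  have hTlim : ∀ x, Tendsto (fun n => d (idx n x)) atTop (𝓝 x) := by
    intro x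
    rw [tendsto_iff_dist_tendsto_zero]
    refine squeeze_zero (fun n => dist_nonneg) (fun n => ?_)
      tendsto_one_div_add_atTop_nhds_zero_nat
    rw [dist_comm]
    exact le_of_lt (hdist n x)
  -- integrability of discretized inner integrals
  have hGm : ∀ (n : ℕ) (ν : Measure X),
      Measurable fun x : X => ∫ y, k (d (idx n x), d (idx n y)) ∂ν := by
    intro n ν
    exact Measurable.comp (f := idx n) (g := fun i => ∫ y, k (d i, d (idx n y)) ∂ν)
      measurable_from_top (hidxm n)
  have hGint : ∀ (n : ℕ) (ν₁ ν₂ : Measure X) [IsFiniteMeasure ν₁] [IsFiniteMeasure ν₂],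
      Integrable (fun x => ∫ y, k (d (idx n x), d (idx n y)) ∂ν₂) ν₁ := by
    intro n ν₁ ν₂ _ _
    refine bdd_integrable (hGm n ν₂) (M := M * (ν₂ Set.univ).toReal) fun x => ?_
    rw [← Real.norm_eq_abs]
    exact norm_integral_le_of_norm_le_const (ae_of_all _ fun y => by
      simpa [Real.norm_eq_abs] using hk_bdd _)
  -- integrability of true inner integrals
  have hgcont : ∀ (ν : Measure X) [IsFiniteMeasure ν],
      Continuous fun x => ∫ y, k (x, y) ∂ν := by
    intro ν _
    refine continuous_of_dominated
      (fun x => (hk_meas.comp (measurable_const.prodMk measurable_id)).aestronglyMeasurable)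
      (fun x => ae_of_all _ fun y => by simpa [Real.norm_eq_abs] using hk_bdd (x, y))
      (integrable_const M) (ae_of_all _ fun y => ?_)
    exact hk_cont.comp (continuous_id.prodMk continuous_const)
  have hgint : ∀ (ν₁ ν₂ : Measure X) [IsFiniteMeasure ν₁] [IsFiniteMeasure ν₂],
      Integrable (fun x => ∫ y, k (x, y) ∂ν₂) ν₁ := by
    intro ν₁ ν₂ _ _
    refine bdd_integrable (hgcont ν₂).measurable (M := M * (ν₂ Set.univ).toReal) fun x => ?_
    rw [← Real.norm_eq_abs]
    exact norm_integral_le_of_norm_le_const (ae_of_all _ fun y => by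
      simpa [Real.norm_eq_abs] using hk_bdd _)
  -- discrete nonnegativity
  have hdisc : ∀ n : ℕ, 0 ≤
      ((∫ x, (∫ y, k (d (idx n x), d (idx n y)) ∂μ) ∂μ)
        - ∫ x, (∫ y, k (d (idx n x), d (idx n y)) ∂lam) ∂μ)
      - ((∫ x, (∫ y, k (d (idx n x), d (idx n y)) ∂μ) ∂lam)
        - ∫ x, (∫ y, k (d (idx n x), d (idx n y)) ∂lam) ∂lam) := by
    intro n
    have h := quad_discrete k M hk_bdd hk_meas hk_psd d (idx n) (hidxm n) μ lam
    rwa [integral_sub (hGint n μ μ) (hGint n μ lam),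
      integral_sub (hGint n lam μ) (hGint n lam lam)] at h
  -- convergence
  have hconv : Tendsto (fun n =>
      ((∫ x, (∫ y, k (d (idx n x), d (idx n y)) ∂μ) ∂μ)
        - ∫ x, (∫ y, k (d (idx n x), d (idx n y)) ∂lam) ∂μ)
      - ((∫ x, (∫ y, k (d (idx n x), d (idx n y)) ∂μ) ∂lam)
        - ∫ x, (∫ y, k (d (idx n x), d (idx n y)) ∂lam) ∂lam)) atTop
      (𝓝 (((∫ x, (∫ y, k (x, y) ∂μ) ∂μ) - ∫ x, (∫ y, k (x, y) ∂lam) ∂μ)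
        - ((∫ x, (∫ y, k (x, y) ∂μ) ∂lam) - ∫ x, (∫ y, k (x, y) ∂lam) ∂lam))) := by
    have c1 := tendsto_iter k M hk_bdd hk_meas hk_cont (fun n x => d (idx n x)) hTm hTlim μ μ
    have c2 := tendsto_iter k M hk_bdd hk_meas hk_cont (fun n x => d (idx n x)) hTm hTlim μ lam
    have c3 := tendsto_iter k M hk_bdd hk_meas hk_cont (fun n x => d (idx n x)) hTm hTlim lam μ
    have c4 := tendsto_iter k M hk_bdd hk_meas hk_cont (fun n x => d (idx n x)) hTm hTlim lam lam
    exact (c1.sub c2).sub (c3.sub c4)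
  rw [integral_sub (hgint μ μ) (hgint μ lam), integral_sub (hgint lam μ) (hgint lam lam)]
  exact ge_of_tendsto hconv (Eventually.of_forall hdisc)

/-- Integral of a real-valued function against a finite signed measure,
defined via the Jordan decomposition. -/
noncomputable def sintegral {X : Type*} [MeasurableSpace X]
    (ν : SignedMeasure X) (g : X → ℝ) : ℝ :=
  (∫ x, g x ∂ν.toJordanDecomposition.posPart) -
    (∫ x, g x ∂ν.toJordanDecomposition.negPart)

/-- The kernel energy `E_k(ν) = ∬ k(x,x') dν(x) dν(x')` of a finite signed measure. -/
noncomputable def energy {X : Type*} [MeasurableSpace X]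
    (k : X × X → ℝ) (ν : SignedMeasure X) : ℝ :=
  sintegral ν fun x => sintegral ν fun y => k (x, y)

/-- For a bounded continuous symmetric positive semidefinite kernel on a separable
metric space, the energy of every finite signed Borel measure is nonnegative. -/
theorem energy_nonneg_of_posSemidef
    {X : Type*} [MetricSpace X] [TopologicalSpace.SeparableSpace X]
    [MeasurableSpace X] [BorelSpace X]
    (k : X × X → ℝ) (hk_bdd : ∃ M, ∀ p, |k p| ≤ M) (hk_cont : Continuous k)
    (hk_symm : ∀ x x', k (x, x') = k (x', x))
    (hk_psd : ∀ (m : ℕ) (x : Fin m → X) (c : Fin m → ℝ),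
      0 ≤ ∑ i, ∑ j, c i * c j * k (x i, x j))
    (ν : SignedMeasure X) :
    0 ≤ energy k ν := by
  obtain ⟨M, hM⟩ := hk_bdd
  rcases isEmpty_or_nonempty X with hX | hX
  · have h1 : ν.toJordanDecomposition.posPart = 0 := Measure.eq_zero_of_isEmpty _
    have h2 : ν.toJordanDecomposition.negPart = 0 := Measure.eq_zero_of_isEmpty _
    simp [energy, sintegral, h1, h2]
  · exact key_nonneg k M hM hk_cont hk_psd
      ν.toJordanDecomposition.posPart ν.toJordanDecomposition.negPart
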